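/- Let H be a complex Hilbert space and D a self-adjoint, densely defined (possibly unbounded) operator on H. Suppose (a_n) is a sequence of bounded operators on H such that each a_n has bounded commutator with D (with continuous extension T_n := [D, a_n]), a_n → a in operator norm for some bounded operator a, and T_n → T in operator norm for some bounded operator T. Then a·dom(D) ⊆ dom(D) and D(aξ) − a(Dξ) = Tξ for every ξ ∈ dom(D); in particular the derivation a ↦ [D, a], defined on the bounded operators having bounded commutator with D, is closed (hence closable). -/

import Mathlib

open Filter Topology

/-- Let `H` be a complex Hilbert space and `D` a self-adjoint, densely
defined (possibly unbounded) operator on `H`.  Suppose `(aₙ)` is a sequence of bounded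
operators on `H` such that each `aₙ` has bounded commutator with `D` (with continuous
extension `Tₙ = [D, aₙ]`), `aₙ → a` in operator norm, and `Tₙ → T` in operator norm.
Then `a · dom D ⊆ dom D` and `D (a ξ) - a (D ξ) = T ξ` for every `ξ ∈ dom D`; in other
words the derivation `a ↦ [D, a]` is closed. -/
theorem closedness_of_commutator_derivation
    {H : Type*} [NormedAddCommGroup H] [InnerProductSpace ℂ H] [CompleteSpace H]
    (D : H →ₗ.[ℂ] H) (hdense : Dense (D.domain : Set H)) (hsa : IsSelfAdjoint D)
    (aseq Tseq : ℕ → H →L[ℂ] H) (a T : H →L[ℂ] H)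
    (hmap : ∀ n, ∀ ξ ∈ D.domain, aseq n ξ ∈ D.domain)
    (hcomm : ∀ n, ∀ ξ, ∀ hξ : ξ ∈ D.domain,
      D ⟨aseq n ξ, hmap n ξ hξ⟩ - aseq n (D ⟨ξ, hξ⟩) = Tseq n ξ)
    (ha : Tendsto aseq atTop (𝓝 a))
    (hT : Tendsto Tseq atTop (𝓝 T)) :
    ∀ ξ, ∀ hξ : ξ ∈ D.domain, ∃ hξ' : a ξ ∈ D.domain,
      D ⟨a ξ, hξ'⟩ - a (D ⟨ξ, hξ⟩) = T ξ := by
  have hadj : D.adjoint = D := LinearPMap.isSelfAdjoint_def.mp hsa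
  -- symmetry of D
  have hsym : ∀ x y : D.domain, (inner ℂ (D x) (y : H) : ℂ) = inner ℂ (x : H) (D y) := by
    have h := LinearPMap.adjoint_isFormalAdjoint (T := D) hdense
    rw [hadj] at h
    exact h
  intro ξ hξ
  -- limits of evaluations
  have haξ : Tendsto (fun n => aseq n ξ) atTop (𝓝 (a ξ)) :=
    ((ContinuousLinearMap.apply ℂ H ξ).continuous.tendsto a).comp ha
  have hTξ : Tendsto (fun n => Tseq n ξ) atTop (𝓝 (T ξ)) :=
    ((ContinuousLinearMap.apply ℂ H ξ).continuous.tendsto T).comp hT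
  have haDξ : Tendsto (fun n => aseq n (D ⟨ξ, hξ⟩)) atTop (𝓝 (a (D ⟨ξ, hξ⟩))) :=
    ((ContinuousLinearMap.apply ℂ H (D ⟨ξ, hξ⟩)).continuous.tendsto a).comp ha
  set w : H := T ξ + a (D ⟨ξ, hξ⟩) with hw
  have hwlim : Tendsto (fun n => Tseq n ξ + aseq n (D ⟨ξ, hξ⟩)) atTop (𝓝 w) := hTξ.add haDξ
  -- key identity
  have key : ∀ x : D.domain, (inner ℂ w (x : H) : ℂ) = inner ℂ (a ξ) (D x) := by
    intro x
    have hn : ∀ n : ℕ, (inner ℂ (aseq n ξ) (D x) : ℂ)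
        = inner ℂ (Tseq n ξ + aseq n (D ⟨ξ, hξ⟩)) (x : H) := by
      intro n
      have h1 : D ⟨aseq n ξ, hmap n ξ hξ⟩ = Tseq n ξ + aseq n (D ⟨ξ, hξ⟩) := by
        have := hcomm n ξ hξ
        linear_combination (norm := module) this
      calc (inner ℂ (aseq n ξ) (D x) : ℂ)
          = inner ℂ (D (⟨aseq n ξ, hmap n ξ hξ⟩ : D.domain)) (x : H) :=
            (hsym ⟨aseq n ξ, hmap n ξ hξ⟩ x).symm
        _ = inner ℂ (Tseq n ξ + aseq n (D ⟨ξ, hξ⟩)) (x : H) := by rw [h1]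
    have l1 : Tendsto (fun n => (inner ℂ (aseq n ξ) (D x) : ℂ)) atTop (𝓝 (inner ℂ (a ξ) (D x))) :=
      ((continuous_inner (𝕜 := ℂ) (E := H)).tendsto _).comp (haξ.prodMk_nhds tendsto_const_nhds)
    have l2 : Tendsto (fun n => (inner ℂ (Tseq n ξ + aseq n (D ⟨ξ, hξ⟩)) (x : H) : ℂ)) atTop
        (𝓝 (inner ℂ w (x : H))) :=
      ((continuous_inner (𝕜 := ℂ) (E := H)).tendsto _).comp (hwlim.prodMk_nhds tendsto_const_nhds)
    have := tendsto_nhds_unique (l1.congr fun n => hn n) l2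
    exact this.symm
  -- membership
  have hmem : a ξ ∈ D.adjoint.domain :=
    LinearPMap.mem_adjoint_domain_of_exists _ ⟨w, fun x => key x⟩
  have hξ' : a ξ ∈ D.domain := by rw [← hadj]; exact hmem
  refine ⟨hξ', ?_⟩
  have hDw : D ⟨a ξ, hξ'⟩ = w := by
    refine hdense.eq_of_inner_left ℂ fun v hv => ?_
    exact (hsym ⟨a ξ, hξ'⟩ ⟨v, hv⟩).trans (key ⟨v, hv⟩).symm
  rw [hDw, hw]
  abel
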